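/- Let a be a point of the upper half-plane ℍ = {z : Im z > 0}, set c = |a|²/Im a and b = |a|²/Re a (interpreting z/(1−z/b) = z when Re a = 0), and let γ_a be the arc from 0 to a of the circle through 0 and a centered on ℝ (a vertical segment when Re a = 0); γ_a meets ℝ orthogonally at 0. Then the map f_a(z) = √((z/(1−z/b))² + c²), where √ denotes the branch of the square root mapping ℂ ∖ [0,∞) onto ℍ, is a conformal bijection of ℍ ∖ γ_a onto ℍ with f_a(a) = 0. -/

import Mathlib

open Complex Set Metric

noncomputable section

/-- The (open) upper half-plane, as a subset of `ℂ`. -/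
def UHP : Set ℂ := {z : ℂ | 0 < z.im}

/-- `f` is a conformal bijection (holomorphic bijection) of `U` onto `V`. -/
def ConfBijOn (f : ℂ → ℂ) (U V : Set ℂ) : Prop :=
  DifferentiableOn ℂ f U ∧ Set.InjOn f U ∧ f '' U = V

/-- The branch of the square root mapping `ℂ ∖ [0,∞)` onto the upper half-plane. -/
def sqrtH (z : ℂ) : ℂ := Complex.I * (-z) ^ ((1 : ℂ) / 2)

/-- The basic geodesic map `f_a(z) = √((z/(1−z/b))² + c²)` with `c = |a|²/Im a`,
`b = |a|²/Re a` (interpreting `z/(1−z/b) = z` when `Re a = 0`). -/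
def geoMap (a : ℂ) (z : ℂ) : ℂ :=
  sqrtH ((if a.re = 0 then z
      else z / (1 - z / ((‖a‖ ^ 2 / a.re : ℝ) : ℂ))) ^ 2
    + (((‖a‖ ^ 2 / a.im : ℝ) : ℂ)) ^ 2)

/-- The arc `γ_a` from `0` to `a` of the circle through `0` and `a` centered on `ℝ`
(a vertical segment when `Re a = 0`); it is parametrized as the preimage of the
segment `[0, ic]` under the Möbius map `z ↦ z/(1−z/b)`. -/
def geoArc (a : ℂ) : Set ℂ :=
  (fun t : ℝ =>
      if a.re = 0 then (t : ℂ) * (Complex.I * ((‖a‖ ^ 2 / a.im : ℝ) : ℂ))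
      else ((t : ℂ) * (Complex.I * ((‖a‖ ^ 2 / a.im : ℝ) : ℂ))) /
        (1 + ((t : ℂ) * (Complex.I * ((‖a‖ ^ 2 / a.im : ℝ) : ℂ))) /
          ((‖a‖ ^ 2 / a.re : ℝ) : ℂ))) '' Set.Icc (0 : ℝ) 1

namespace GeoAux

/-- The nonnegative real axis `[0,∞)`, as a subset of `ℂ`. -/
def Q : Set ℂ := {z : ℂ | z.im = 0 ∧ 0 ≤ z.re}

/-- The segment from `0` to `I*c`. -/
def Lset (c : ℝ) : Set ℂ :=
  (fun t : ℝ => (t : ℂ) * (Complex.I * (c : ℂ))) '' Set.Icc (0 : ℝ) 1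

lemma not_mem_Q_iff {z : ℂ} : z ∉ Q ↔ -z ∈ slitPlane := by
  simp only [Q, mem_setOf_eq, not_and_or, not_le, mem_slitPlane_iff, neg_re, neg_im]
  constructor
  · rintro (h | h)
    · exact Or.inr (by simpa using h)
    · exact Or.inl (by linarith)
  · rintro (h | h)
    · exact Or.inr (by linarith)
    · exact Or.inl (by simpa using h)

lemma sqrtH_zero : sqrtH 0 = 0 := by
  simp [sqrtH, Complex.zero_cpow (show (1:ℂ)/2 ≠ 0 by norm_num)]

lemma sqrtH_sq_eq (z : ℂ) : sqrtH z ^ 2 = z := by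
  have h2 : ((-z) ^ ((1:ℂ)/2)) ^ (2:ℕ) = -z := by
    rw [show (1:ℂ)/2 = (((2:ℕ):ℂ))⁻¹ by norm_num]
    exact Complex.cpow_nat_inv_pow _ two_ne_zero
  have h3 : sqrtH z ^ 2 = Complex.I ^ 2 * ((-z) ^ ((1:ℂ)/2)) ^ (2:ℕ) := by
    rw [sqrtH]; ring
  rw [h3, h2, Complex.I_sq]; ring

lemma im_sqrtH_nonneg (z : ℂ) : 0 ≤ (sqrtH z).im := by
  rcases eq_or_ne z 0 with rfl | hz
  · simp [sqrtH, Complex.zero_cpow (show (1:ℂ)/2 ≠ 0 by norm_num)]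
  have hnz : (-z) ≠ 0 := neg_ne_zero.mpr hz
  have him : (sqrtH z).im = ((-z) ^ ((1:ℂ)/2)).re := by
    simp [sqrtH, Complex.mul_im]
  rw [him, Complex.cpow_def_of_ne_zero hnz, Complex.exp_re]
  apply mul_nonneg (Real.exp_nonneg _)
  have harg : (Complex.log (-z) * ((1:ℂ)/2)).im = (-z).arg / 2 := by
    simp [Complex.mul_im, Complex.log_im]
    ring
  rw [harg]
  apply Real.cos_nonneg_of_mem_Icc
  constructor
  · have := Complex.neg_pi_lt_arg (-z); linarith
  · have := Complex.arg_le_pi (-z); linarith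

lemma sqrtH_mem_UHP {z : ℂ} (hz : z ∉ Q) : sqrtH z ∈ UHP := by
  rcases lt_or_eq_of_le (im_sqrtH_nonneg z) with h | h
  · exact h
  exfalso
  apply hz
  have hsq := sqrtH_sq_eq z
  set u := sqrtH z with hu
  have hui : u.im = 0 := h.symm
  constructor
  · rw [← hsq, pow_two, Complex.mul_im, hui]; ring
  · rw [← hsq, pow_two, Complex.mul_re, hui]; nlinarith

lemma sq_not_mem_Q {w : ℂ} (hw : w ∈ UHP) : w ^ 2 ∉ Q := by
  rintro ⟨him, hre⟩
  have hw' : 0 < w.im := hw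
  rw [pow_two, Complex.mul_im] at him
  have hre0 : w.re = 0 := by nlinarith
  rw [pow_two, Complex.mul_re, hre0] at hre
  nlinarith

lemma sqrtH_sq {w : ℂ} (hw : w ∈ UHP) : sqrtH (w ^ 2) = w := by
  have h1 : sqrtH (w ^ 2) ^ 2 = w ^ 2 := sqrtH_sq_eq _
  rw [show sqrtH (w^2)^2 = sqrtH (w^2) * sqrtH (w^2) from sq (sqrtH (w^2)) ▸ rfl] at h1
  rw [show w^2 = w*w from sq w ▸ rfl] at h1
  rw [mul_self_eq_mul_self_iff] at h1
  rw [show w*w = w^2 from (sq w).symm ▸ rfl] at h1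
  rcases h1 with h | h
  · exact h
  · exfalso
    have h2 := im_sqrtH_nonneg (w ^ 2)
    rw [h] at h2
    simp only [Complex.neg_im] at h2
    have hw' : 0 < w.im := hw
    linarith

lemma differentiableAt_sqrtH {z : ℂ} (hz : z ∉ Q) : DifferentiableAt ℂ sqrtH z := by
  have hslit : -z ∈ slitPlane := not_mem_Q_iff.mp hz
  show DifferentiableAt ℂ (fun z => Complex.I * (-z) ^ ((1:ℂ)/2)) z
  exact (differentiableAt_const _).mul
    ((differentiableAt_id.neg.cpow (differentiableAt_const _) hslit))

/-- On `UHP \ Lset c`, the value `z^2 + c^2` avoids `Q`. -/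
lemma g_not_mem_Q {c : ℝ} (hc : 0 < c) {w : ℂ} (hw : w ∈ UHP \ Lset c) :
    w ^ 2 + ((c : ℂ)) ^ 2 ∉ Q := by
  obtain ⟨hwU, hwL⟩ := hw
  have hwim : 0 < w.im := hwU
  rintro ⟨him, hre⟩
  have hci : ((c:ℂ)^2).im = 0 := by
    simp [pow_two, Complex.mul_im]
  have hcr : ((c:ℂ)^2).re = c^2 := by
    simp [pow_two, Complex.mul_re]
  rw [Complex.add_im, hci, add_zero, pow_two, Complex.mul_im] at him
  have hre0 : w.re = 0 := by nlinarith
  rw [Complex.add_re, hcr, pow_two, Complex.mul_re, hre0] at hre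
  have hle : w.im ≤ c := by nlinarith
  apply hwL
  refine ⟨w.im / c, ⟨by positivity, by rw [div_le_one hc]; exact hle⟩, ?_⟩
  apply Complex.ext
  · simp [Complex.mul_re, hre0]
  · simp [Complex.mul_im]
    field_simp

lemma g_image {c : ℝ} (hc : 0 < c) :
    (fun w : ℂ => w ^ 2 + ((c : ℂ)) ^ 2) '' (UHP \ Lset c) = Qᶜ := by
  apply Set.Subset.antisymm
  · rintro _ ⟨w, hw, rfl⟩
    exact g_not_mem_Q hc hw
  · rintro ζ (hζ : ζ ∉ Q)
    have hci : ((c:ℂ)^2).im = 0 := by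
      simp [pow_two, Complex.mul_im]
    have hcr : ((c:ℂ)^2).re = c^2 := by
      simp [pow_two, Complex.mul_re]
    set u : ℂ := ζ - ((c:ℂ))^2 with hu
    have huQ : u ∉ Q := by
      rintro ⟨him, hre⟩
      apply hζ
      have hζe : ζ = u + ((c:ℂ))^2 := by rw [hu]; ring
      constructor
      · rw [hζe, Complex.add_im, him, hci]; ring
      · rw [hζe, Complex.add_re, hcr]; nlinarith
    refine ⟨sqrtH u, ⟨⟨sqrtH_mem_UHP huQ, ?_⟩,
      show sqrtH u ^ 2 + ((c:ℂ))^2 = ζ by rw [sqrtH_sq_eq, hu]; ring⟩⟩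
    rintro ⟨t, ⟨ht0, ht1⟩, hts⟩
    have hw : sqrtH u ∈ UHP := sqrtH_mem_UHP huQ
    have him : (sqrtH u).im = t * c := by
      rw [← hts]; simp [Complex.mul_im]
    have hre : (sqrtH u).re = 0 := by
      rw [← hts]; simp [Complex.mul_re]
    apply hζ
    have hζeq : ζ = (sqrtH u) ^ 2 + ((c:ℂ))^2 := by rw [sqrtH_sq_eq, hu]; ring
    rw [hζeq]
    constructor
    · rw [Complex.add_im, hci, pow_two, Complex.mul_im, hre]; ring
    · rw [Complex.add_re, hcr, pow_two, Complex.mul_re, hre, him]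
      have htc : t * c ≤ c := by nlinarith
      nlinarith [mul_self_le_mul_self (by positivity : (0:ℝ) ≤ t * c) htc]

lemma core {c : ℝ} (hc : 0 < c) :
    ConfBijOn (fun z => sqrtH (z ^ 2 + ((c : ℂ)) ^ 2)) (UHP \ Lset c) UHP := by
  refine ⟨?_, ?_, ?_⟩
  · intro z hz
    apply DifferentiableAt.differentiableWithinAt
    exact (differentiableAt_sqrtH (g_not_mem_Q hc hz)).comp (f := fun w : ℂ => w ^ 2 + ((c : ℂ)) ^ 2) z
      (by fun_prop)
  · intro z₁ hz₁ z₂ hz₂ h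
    have h' : sqrtH (z₁ ^ 2 + ((c:ℂ))^2) = sqrtH (z₂ ^ 2 + ((c:ℂ))^2) := h
    have h1 : z₁ ^ 2 + ((c:ℂ))^2 = z₂ ^ 2 + ((c:ℂ))^2 := by
      have e1 := sqrtH_sq_eq (z₁ ^ 2 + ((c:ℂ))^2)
      have e2 := sqrtH_sq_eq (z₂ ^ 2 + ((c:ℂ))^2)
      rw [← e1, ← e2, h']
    have h2 : z₁ * z₁ = z₂ * z₂ := by linear_combination h1
    rcases mul_self_eq_mul_self_iff.mp h2 with h3 | h3
    · exact h3
    · exfalso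
      have i1 : 0 < z₁.im := hz₁.1
      have i2 : 0 < z₂.im := hz₂.1
      have : z₁.im = -z₂.im := by rw [h3]; simp
      linarith
  · have h1 : (fun z => sqrtH (z ^ 2 + ((c : ℂ)) ^ 2)) '' (UHP \ Lset c)
        = sqrtH '' ((fun w : ℂ => w ^ 2 + ((c : ℂ)) ^ 2) '' (UHP \ Lset c)) := by
      rw [Set.image_image]
    rw [h1, g_image hc]
    apply Set.Subset.antisymm
    · rintro _ ⟨u, hu, rfl⟩
      exact sqrtH_mem_UHP hu
    · intro w hw
      exact ⟨w ^ 2, sq_not_mem_Q hw, sqrtH_sq hw⟩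

/-! ### The Möbius map -/

/-- Möbius map `z ↦ z/(1 - z/b)` for real `b`. -/
def M (b : ℝ) (z : ℂ) : ℂ := z / (1 - z / (b : ℂ))

lemma real_sub_ne {r : ℝ} {z : ℂ} (hz : z ∈ UHP) : (r : ℂ) - z ≠ 0 := by
  intro h
  have h2 := sub_eq_zero.mp h
  have h3 : (0:ℝ) < z.im := hz
  rw [← h2] at h3
  simp at h3

lemma Lset_sub_ne {r c : ℝ} (hr : r ≠ 0) (hc : 0 < c) {w : ℂ} (hw : w ∈ Lset c) :
    (r : ℂ) - w ≠ 0 := by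
  obtain ⟨t, ⟨ht0, _⟩, rfl⟩ := hw
  intro h
  have h2 := sub_eq_zero.mp h
  have him : t * c = 0 := by
    have h3 := congrArg Complex.im h2
    simpa [Complex.mul_im] using h3.symm
  have ht : t = 0 := by
    rcases mul_eq_zero.mp him with h4 | h4
    · exact h4
    · exact absurd h4 hc.ne'
  rw [ht] at h2
  simp at h2
  exact hr h2

lemma Mden_ne {b : ℝ} (hb : b ≠ 0) {z : ℂ} (hz : z ∈ UHP) : 1 - z / (b : ℂ) ≠ 0 := by
  intro h
  have hb' : (b : ℂ) ≠ 0 := Complex.ofReal_ne_zero.mpr hb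
  have hz1 : z = (b : ℂ) := by
    have h2 := sub_eq_zero.mp h
    field_simp at h2
    exact h2.symm
  have h3 : (0:ℝ) < z.im := hz
  rw [hz1] at h3
  simp at h3

lemma M_eq {b : ℝ} (hb : b ≠ 0) (z : ℂ) : M b z = (b : ℂ) * z / ((b : ℂ) - z) := by
  have hb' : (b : ℂ) ≠ 0 := Complex.ofReal_ne_zero.mpr hb
  rw [M, show (1 : ℂ) - z / (b:ℂ) = ((b:ℂ) - z) / (b:ℂ) by field_simp,
    div_div_eq_mul_div, mul_comm]

lemma M_mem {b : ℝ} (hb : b ≠ 0) {z : ℂ} (hz : z ∈ UHP) : M b z ∈ UHP := by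
  have hzi : 0 < z.im := hz
  have hden : (b : ℂ) - z ≠ 0 := real_sub_ne hz
  rw [M_eq hb]
  show 0 < ((b : ℂ) * z / ((b : ℂ) - z)).im
  rw [Complex.div_im]
  have hn : 0 < Complex.normSq ((b:ℂ) - z) := Complex.normSq_pos.mpr hden
  have h1 : ((b:ℂ) * z).im = b * z.im := by simp [Complex.mul_im]
  have h2 : ((b:ℂ) * z).re = b * z.re := by simp [Complex.mul_re]
  have h3 : ((b:ℂ) - z).re = b - z.re := by simp
  have h4 : ((b:ℂ) - z).im = -z.im := by simp
  rw [h1, h2, h3, h4]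
  have key : b * z.im * (b - z.re) / Complex.normSq ((b:ℂ) - z)
      - b * z.re * -z.im / Complex.normSq ((b:ℂ) - z)
      = b ^ 2 * z.im / Complex.normSq ((b:ℂ) - z) := by
    field_simp
    ring
  rw [key]
  positivity

lemma M_cancel {b : ℝ} (hb : b ≠ 0) {z : ℂ} (h1 : (b : ℂ) - z ≠ 0) :
    M (-b) (M b z) = z := by
  have hb' : (b : ℂ) ≠ 0 := Complex.ofReal_ne_zero.mpr hb
  rw [M_eq hb, M_eq (neg_ne_zero.mpr hb)]
  push_cast
  have hden : -(b:ℂ) - (b:ℂ) * z / ((b:ℂ) - z) = -(b:ℂ)^2 / ((b:ℂ) - z) := by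
    field_simp
    ring
  rw [hden]
  rw [div_eq_iff (by
    apply div_ne_zero
    · simpa using pow_ne_zero 2 hb'
    · exact h1)]
  field_simp

lemma M_cancel' {b : ℝ} (hb : b ≠ 0) {w : ℂ} (h1 : ((-b : ℝ) : ℂ) - w ≠ 0) :
    M b (M (-b) w) = w := by
  have := M_cancel (neg_ne_zero.mpr hb) h1
  rwa [neg_neg] at this

lemma M_image {b c : ℝ} (hb : b ≠ 0) (hc : 0 < c) :
    M b '' (UHP \ (M (-b) '' Lset c)) = UHP \ Lset c := by
  have hb2 : (-b : ℝ) ≠ 0 := neg_ne_zero.mpr hb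
  apply Set.Subset.antisymm
  · rintro _ ⟨z, ⟨hzU, hzA⟩, rfl⟩
    refine ⟨M_mem hb hzU, ?_⟩
    intro hL
    exact hzA ⟨M b z, hL, M_cancel hb (real_sub_ne hzU)⟩
  · rintro w ⟨hwU, hwL⟩
    have h2 : M b (M (-b) w) = w := M_cancel' hb (real_sub_ne hwU)
    refine ⟨M (-b) w, ⟨M_mem hb2 hwU, ?_⟩, h2⟩
    rintro ⟨w', hw', he⟩
    apply hwL
    have h1 : M b (M (-b) w') = w' := M_cancel' hb (Lset_sub_ne hb2 hc hw')
    have hww : w' = w := by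
      calc w' = M b (M (-b) w') := h1.symm
        _ = M b (M (-b) w) := by rw [he]
        _ = w := h2
    rwa [← hww]

lemma M_confBijOn {b c : ℝ} (hb : b ≠ 0) (hc : 0 < c) :
    ConfBijOn (M b) (UHP \ (M (-b) '' Lset c)) (UHP \ Lset c) := by
  refine ⟨?_, ?_, M_image hb hc⟩
  · intro z hz
    apply DifferentiableAt.differentiableWithinAt
    show DifferentiableAt ℂ (fun z => z / (1 - z / (b : ℂ))) z
    exact differentiableAt_id.div
      ((differentiableAt_const 1).sub (differentiableAt_id.div_const _))
      (Mden_ne hb hz.1)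
  · intro z₁ h₁ z₂ h₂ he
    have e1 := M_cancel hb (real_sub_ne h₁.1)
    have e2 := M_cancel hb (real_sub_ne h₂.1)
    rw [← e1, he, e2]

lemma confBijOn_comp {f g : ℂ → ℂ} {U V W : Set ℂ} (hf : ConfBijOn f U V)
    (hg : ConfBijOn g V W) : ConfBijOn (fun z => g (f z)) U W := by
  obtain ⟨hfd, hfi, hfim⟩ := hf
  obtain ⟨hgd, hgi, hgim⟩ := hg
  have hmaps : Set.MapsTo f U V := hfim ▸ Set.mapsTo_image f U
  refine ⟨hgd.comp hfd hmaps, ?_, ?_⟩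
  · exact fun x hx y hy h => hfi hx hy (hgi (hmaps hx) (hmaps hy) h)
  · rw [show (fun z => g (f z)) '' U = g '' (f '' U) from (Set.image_image g f U).symm,
      hfim, hgim]

end GeoAux

/-- The basic map `f_a` is a conformal bijection of `ℍ ∖ γ_a` onto `ℍ` with `f_a(a) = 0`. -/
theorem geoMap_conformal_bijection (a : ℂ) (ha : a ∈ UHP) :
    ConfBijOn (geoMap a) (UHP \ geoArc a) UHP ∧ geoMap a a = 0 := by
  have him : 0 < a.im := ha
  have ha0 : a ≠ 0 := by
    intro h
    rw [h] at him
    simp at him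
  have habs : ‖a‖ ≠ 0 := norm_ne_zero_iff.mpr ha0
  set c : ℝ := ‖a‖ ^ 2 / a.im with hc_def
  have hc : 0 < c := div_pos (pow_pos (norm_pos_iff.mpr ha0) 2) him
  by_cases hre : a.re = 0
  · -- vertical-segment case
    have h1 : geoMap a = fun z => sqrtH (z ^ 2 + ((c : ℂ)) ^ 2) := by
      funext z
      unfold geoMap
      rw [if_pos hre, hc_def]
    have h2 : geoArc a = GeoAux.Lset c := by
      unfold geoArc GeoAux.Lset
      rw [hc_def]
      exact Set.image_congr' (fun t => by rw [if_pos hre])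
    constructor
    · rw [h1, h2]; exact GeoAux.core hc
    · rw [h1]
      have hcc : c = a.im := by
        rw [hc_def, Complex.sq_norm, Complex.normSq_apply, hre]
        field_simp
        ring
      have hz : a ^ 2 + ((c : ℂ)) ^ 2 = 0 := by
        have hcr : (((c:ℂ))^2).re = c^2 := by simp [pow_two, Complex.mul_re]
        have hci : (((c:ℂ))^2).im = 0 := by simp [pow_two, Complex.mul_im]
        apply Complex.ext
        · rw [Complex.add_re, Complex.zero_re, pow_two, Complex.mul_re, hcr, hre, hcc]
          ring
        · rw [Complex.add_im, Complex.zero_im, pow_two, Complex.mul_im, hci, hre]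
          ring
      show sqrtH (a ^ 2 + ((c : ℂ)) ^ 2) = 0
      rw [hz]
      exact GeoAux.sqrtH_zero
  · -- genuine Möbius case
    set B : ℝ := ‖a‖ ^ 2 / a.re with hB_def
    have hB : B ≠ 0 := div_ne_zero (pow_ne_zero _ habs) hre
    have hgeo : geoMap a = fun z => sqrtH ((GeoAux.M B z) ^ 2 + ((c : ℂ)) ^ 2) := by
      funext z
      unfold geoMap GeoAux.M
      rw [if_neg hre, hc_def, hB_def]
    have harc : geoArc a = GeoAux.M (-B) '' GeoAux.Lset c := by
      unfold geoArc GeoAux.Lset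
      rw [Set.image_image, hc_def, hB_def]
      refine Set.image_congr' (fun t => ?_)
      rw [if_neg hre]
      show _ = GeoAux.M _ _
      unfold GeoAux.M
      rw [Complex.ofReal_neg, div_neg, sub_neg_eq_add]
    constructor
    · rw [hgeo, harc]
      exact GeoAux.confBijOn_comp (f := GeoAux.M B)
        (g := fun w => sqrtH (w ^ 2 + ((c : ℂ)) ^ 2))
        (GeoAux.M_confBijOn hB hc) (GeoAux.core hc)
    · rw [hgeo]
      have hre' : (a.re : ℂ) ≠ 0 := Complex.ofReal_ne_zero.mpr hre
      have him' : (a.im : ℂ) ≠ 0 := Complex.ofReal_ne_zero.mpr him.ne'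
      have hnsq : ‖a‖ ^ 2 = a.re ^ 2 + a.im ^ 2 := by
        rw [Complex.sq_norm, Complex.normSq_apply]; ring
      have hMa : GeoAux.M B a = Complex.I * (c : ℂ) := by
        rw [GeoAux.M_eq hB, div_eq_iff (GeoAux.real_sub_ne ha)]
        apply Complex.ext
        · simp only [hB_def, hc_def, hnsq, Complex.mul_re, Complex.mul_im,
            Complex.sub_re, Complex.sub_im, Complex.ofReal_re, Complex.ofReal_im,
            Complex.I_re, Complex.I_im]
          field_simp
          try ring
        · simp only [hB_def, hc_def, hnsq, Complex.mul_re, Complex.mul_im,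
            Complex.sub_re, Complex.sub_im, Complex.ofReal_re, Complex.ofReal_im,
            Complex.I_re, Complex.I_im]
          field_simp
          try ring
      show sqrtH ((GeoAux.M B a) ^ 2 + ((c : ℂ)) ^ 2) = 0
      rw [hMa, show (Complex.I * (c : ℂ)) ^ 2 + ((c : ℂ)) ^ 2 = 0 by
        linear_combination ((c : ℝ) : ℂ) ^ 2 * Complex.I_sq]
      exact GeoAux.sqrtH_zero
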